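/- Key norm estimate in the over-approximation proof: if Z̄ = 𝐀^{-1/2}𝚼𝐐^{1/2} + λΔ/‖Δ‖ with 𝚼ᵀ𝚼 ⪯ I, 𝐀 ≻ 0, 𝐐 ⪰ 0, 0 ≤ λ ≤ γ, Δ ≠ 0, then Z̄ᵀ𝐀Z̄ ⪯ 𝐐 + (2γ‖𝐀‖^{1/2}‖𝐐‖^{1/2} + γ²‖𝐀‖) Iₙ. -/

import Mathlib

open Matrix

/-- operator (induced 2-) norm of a real matrix -/
noncomputable def opNorm {m n : Type*} [Fintype m] [Fintype n] [DecidableEq n]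
    (M : Matrix m n ℝ) : ℝ :=
  ‖LinearMap.toContinuousLinearMap (Matrix.toEuclideanLin M)‖

/-- The square root of a positive semidefinite matrix, as `Matrix.PosSemidef.sqrt` was defined
in Mathlib (Dec 2024); that definition has since been removed. -/
noncomputable def Matrix.PosSemidef.sqrt {n : Type*} [Fintype n] [DecidableEq n]
    {A : Matrix n n ℝ} (hA : A.PosSemidef) : Matrix n n ℝ :=
  (hA.1.eigenvectorUnitary : Matrix n n ℝ) * diagonal ((↑) ∘ (Real.sqrt ·) ∘ hA.1.eigenvalues) *
    (star (hA.1.eigenvectorUnitary : Matrix n n ℝ))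

lemma Matrix.PosSemidef.sqrt_mul_self {n : Type*} [Fintype n] [DecidableEq n]
    {A : Matrix n n ℝ} (hA : A.PosSemidef) : hA.sqrt * hA.sqrt = A := by
  have hU : star (hA.1.eigenvectorUnitary : Matrix n n ℝ) * (hA.1.eigenvectorUnitary : Matrix n n ℝ) = 1 :=
    Unitary.coe_star_mul_self _
  have e := hA.1.spectral_theorem
  rw [Unitary.conjStarAlgAut_apply] at e
  have key : diagonal (((↑) ∘ (Real.sqrt ·) ∘ hA.1.eigenvalues) : n → ℝ) *
      diagonal ((↑) ∘ (Real.sqrt ·) ∘ hA.1.eigenvalues) = diagonal (RCLike.ofReal ∘ hA.1.eigenvalues) := by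
    rw [diagonal_mul_diagonal]
    congr 1
    funext i
    simp [Real.mul_self_sqrt (hA.eigenvalues_nonneg i)]
  refine Eq.trans ?_ e.symm
  simp only [Matrix.PosSemidef.sqrt, Matrix.mul_assoc]
  congr 1
  simp only [← Matrix.mul_assoc]
  rw [Matrix.mul_assoc _ (star _) _, hU, Matrix.mul_one, key]

lemma Matrix.PosSemidef.sqrt_isHermitian {n : Type*} [Fintype n] [DecidableEq n]
    {A : Matrix n n ℝ} (hA : A.PosSemidef) : hA.sqrt.IsHermitian := by
  simp only [Matrix.PosSemidef.sqrt, IsHermitian, conjTranspose_mul,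
    diagonal_conjTranspose, Matrix.mul_assoc]
  simp [star_eq_conjTranspose]

section aux

set_option linter.unusedSectionVars false

variable {m n : Type*} [Fintype m] [Fintype n] [DecidableEq n]

/-- embedding into Euclidean space -/
noncomputable def toE {k : Type*} (x : k → ℝ) : EuclideanSpace ℝ k :=
  (WithLp.equiv 2 (k → ℝ)).symm x

lemma toE_inner (x y : n → ℝ) : @inner ℝ _ _ (toE x) (toE y) = x ⬝ᵥ y := by
  simp [toE, PiLp.inner_apply, dotProduct]
  exact Finset.sum_congr rfl fun i _ => mul_comm _ _

lemma toE_norm_sq (x : n → ℝ) : ‖toE x‖ ^ 2 = x ⬝ᵥ x := by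
  rw [← real_inner_self_eq_norm_sq, toE_inner]

lemma dot_le_norm (x y : n → ℝ) : x ⬝ᵥ y ≤ ‖toE x‖ * ‖toE y‖ := by
  rw [← toE_inner]; exact real_inner_le_norm _ _

lemma toE_add (x y : n → ℝ) : toE (x + y) = toE x + toE y := rfl

lemma toE_smul (c : ℝ) (x : n → ℝ) : toE (c • x) = c • toE x := rfl

lemma toE_mulVec_le (M : Matrix m n ℝ) (x : n → ℝ) :
    ‖toE (M *ᵥ x)‖ ≤ opNorm M * ‖toE x‖ := by
  have h := (LinearMap.toContinuousLinearMap (Matrix.toEuclideanLin M)).le_opNorm (toE x)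
  simpa [toE, opNorm] using h

lemma sqrt_mul_bound {a t s : ℝ} (ha : 0 ≤ a) (ht : 0 ≤ t) (hs : 0 ≤ s)
    (h : t ^ 2 ≤ a * s ^ 2) : t ≤ Real.sqrt a * s := by
  have := Real.sqrt_le_sqrt h
  rwa [Real.sqrt_sq ht, Real.sqrt_mul ha, Real.sqrt_sq hs] at this

lemma opNorm_nonneg' (M : Matrix m n ℝ) : 0 ≤ opNorm M := norm_nonneg _

end aux

/-- key norm estimate: if Z̄ = 𝐀^{-1/2}𝚼𝐐^{1/2} + (λ/‖Δ‖)Δ with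
𝚼ᵀ𝚼 ⪯ I, 0 ≤ λ ≤ γ, Δ ≠ 0, then
Z̄ᵀ𝐀Z̄ ⪯ 𝐐 + (2γ‖𝐀‖^{1/2}‖𝐐‖^{1/2} + γ²‖𝐀‖) Iₙ. -/
theorem stmt_18 (p n : ℕ) (A : Matrix (Fin p) (Fin p) ℝ) (Q : Matrix (Fin n) (Fin n) ℝ)
    (hA : A.PosDef) (hQ : Q.PosSemidef) (Υ : Matrix (Fin p) (Fin n) ℝ)
    (hΥ : ((1 : Matrix (Fin n) (Fin n) ℝ) - Υᵀ * Υ).PosSemidef)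
    (Δ : Matrix (Fin p) (Fin n) ℝ) (hΔ : Δ ≠ 0) (lam γ : ℝ)
    (hlam : 0 ≤ lam) (hlamγ : lam ≤ γ) :
    (Q + (2 * γ * Real.sqrt (opNorm A) * Real.sqrt (opNorm Q) + γ ^ 2 * opNorm A) •
          (1 : Matrix (Fin n) (Fin n) ℝ) -
        ((hA.posSemidef.sqrt)⁻¹ * Υ * hQ.sqrt + (lam / opNorm Δ) • Δ)ᵀ * A *
          ((hA.posSemidef.sqrt)⁻¹ * Υ * hQ.sqrt + (lam / opNorm Δ) • Δ)).PosSemidef := by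
  set a := opNorm A with ha_def
  set q := opNorm Q with hq_def
  set d := opNorm Δ with hd_def
  set S := hA.posSemidef.sqrt with hS_def
  set R := hQ.sqrt with hR_def
  set Z := S⁻¹ * Υ * R + (lam / d) • Δ with hZ_def
  have ha0 : 0 ≤ a := opNorm_nonneg' A
  have hq0 : 0 ≤ q := opNorm_nonneg' Q
  have hγ0 : 0 ≤ γ := le_trans hlam hlamγ
  -- d > 0
  have hd0 : 0 < d := by
    rw [hd_def]
    unfold opNorm
    rw [norm_pos_iff]
    intro h0
    apply hΔ
    have hz : Matrix.toEuclideanLin Δ = 0 := by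
      apply LinearMap.ext
      intro v
      have := congrArg
        (fun (f : EuclideanSpace ℝ (Fin n) →L[ℝ] EuclideanSpace ℝ (Fin p)) => f v) h0
      simpa using this
    exact Matrix.toEuclideanLin.injective (hz.trans (map_zero _).symm)
  -- S is invertible
  have hSsq : S * S = A := hA.posSemidef.sqrt_mul_self
  have hdetS : IsUnit S.det := by
    have hdetA : A.det ≠ 0 := ne_of_gt hA.det_pos
    have hm : S.det * S.det = A.det := by rw [← det_mul, hSsq]
    refine isUnit_iff_ne_zero.mpr fun h => hdetA ?_
    rw [← hm, h, mul_zero]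
  have hSinv : S * S⁻¹ = 1 := mul_nonsing_inv S hdetS
  have hSt : Sᵀ = S := by
    rw [← conjTranspose_eq_transpose_of_trivial]
    exact hA.posSemidef.sqrt_isHermitian
  have hRt : Rᵀ = R := by
    rw [← conjTranspose_eq_transpose_of_trivial]
    exact hQ.sqrt_isHermitian
  have hRsq : R * R = Q := hQ.sqrt_mul_self
  -- S * Z
  have hSZ : S * Z = Υ * R + (lam / d) • (S * Δ) := by
    rw [hZ_def, Matrix.mul_add, Matrix.mul_smul, ← Matrix.mul_assoc, ← Matrix.mul_assoc,
      hSinv, Matrix.one_mul]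
  -- ZᵀAZ = (SZ)ᵀ(SZ)
  have hZAZ : Zᵀ * A * Z = (S * Z)ᵀ * (S * Z) := by
    rw [transpose_mul, hSt, ← hSsq]
    simp [Matrix.mul_assoc]
  -- quadratic form identities
  have quad : ∀ (M : Matrix (Fin p) (Fin n) ℝ) (y : Fin n → ℝ),
      y ⬝ᵥ ((Mᵀ * M) *ᵥ y) = (M *ᵥ y) ⬝ᵥ (M *ᵥ y) := by
    intro M y
    rw [← mulVec_mulVec, dotProduct_mulVec, vecMul_transpose]
  have quadn : ∀ (M : Matrix (Fin n) (Fin n) ℝ) (y : Fin n → ℝ),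
      y ⬝ᵥ ((Mᵀ * M) *ᵥ y) = (M *ᵥ y) ⬝ᵥ (M *ᵥ y) := by
    intro M y
    rw [← mulVec_mulVec, dotProduct_mulVec, vecMul_transpose]
  have quadp : ∀ (M : Matrix (Fin p) (Fin p) ℝ) (y : Fin p → ℝ),
      y ⬝ᵥ ((Mᵀ * M) *ᵥ y) = (M *ᵥ y) ⬝ᵥ (M *ᵥ y) := by
    intro M y
    rw [← mulVec_mulVec, dotProduct_mulVec, vecMul_transpose]
  refine posSemidef_iff_dotProduct_mulVec.mpr ⟨?_, ?_⟩
  · -- Hermitian part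
    have hAt : Aᵀ = A := by
      rw [← conjTranspose_eq_transpose_of_trivial]
      exact hA.1
    have hQt : Qᵀ = Q := by
      rw [← conjTranspose_eq_transpose_of_trivial]
      exact hQ.1
    have h1 : (Zᵀ * A * Z)ᵀ = Zᵀ * A * Z := by
      rw [transpose_mul, transpose_mul, transpose_transpose, hAt, Matrix.mul_assoc]
    show _ᴴ = _
    rw [conjTranspose_eq_transpose_of_trivial, transpose_sub, transpose_add, transpose_smul,
      transpose_one, hQt, h1]
  · -- quadratic form
    intro x
    have hstar : star x = x := by funext i; simp
    rw [hstar, sub_mulVec, add_mulVec, smul_mulVec, one_mulVec, dotProduct_sub,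
      dotProduct_add, dotProduct_smul, smul_eq_mul]
    set c := 2 * γ * Real.sqrt a * Real.sqrt q + γ ^ 2 * a with hc_def
    set s := lam / d with hs_def
    have hs0 : 0 ≤ s := div_nonneg hlam (le_of_lt hd0)
    have hw : x ⬝ᵥ ((Zᵀ * A * Z) *ᵥ x) = ((S * Z) *ᵥ x) ⬝ᵥ ((S * Z) *ᵥ x) := by
      rw [hZAZ]; exact quad _ x
    set u := (Υ * R) *ᵥ x with hu_def
    set v := (S * Δ) *ᵥ x with hv_def
    have hwx : (S * Z) *ᵥ x = u + s • v := by
      rw [hSZ, add_mulVec, smul_mulVec]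
    set nx := ‖toE x‖ with hnx_def
    have hnx0 : 0 ≤ nx := by rw [hnx_def]; exact norm_nonneg _
    set nu := ‖toE u‖ with hnu_def
    set nv := ‖toE v‖ with hnv_def
    have hnv0 : 0 ≤ nv := by rw [hnv_def]; exact norm_nonneg _
    have hxx : x ⬝ᵥ x = nx ^ 2 := (toE_norm_sq x).symm
    -- u ⬝ u ≤ xᵀ Q x
    have hQform : x ⬝ᵥ (Q *ᵥ x) = (R *ᵥ x) ⬝ᵥ (R *ᵥ x) := by
      have h := quadn R x
      rwa [hRt, hRsq] at h
    have hb1 : nu ^ 2 ≤ x ⬝ᵥ (Q *ᵥ x) := by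
      rw [toE_norm_sq]
      have hu2 : u ⬝ᵥ u = (R *ᵥ x) ⬝ᵥ ((Υᵀ * Υ) *ᵥ (R *ᵥ x)) := by
        rw [hu_def, ← mulVec_mulVec]
        exact (quad Υ _).symm
      have hpsd := hΥ.dotProduct_mulVec_nonneg (R *ᵥ x)
      have hstar2 : star (R *ᵥ x) = R *ᵥ x := by funext i; simp
      rw [hstar2, sub_mulVec, one_mulVec, dotProduct_sub] at hpsd
      rw [hu2, hQform]
      linarith
    -- xᵀ Q x ≤ q nx²
    have hQb : x ⬝ᵥ (Q *ᵥ x) ≤ q * nx ^ 2 := by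
      calc x ⬝ᵥ (Q *ᵥ x) ≤ ‖toE x‖ * ‖toE (Q *ᵥ x)‖ := dot_le_norm _ _
        _ ≤ ‖toE x‖ * (q * ‖toE x‖) :=
            mul_le_mul_of_nonneg_left (toE_mulVec_le Q x) (norm_nonneg _)
        _ = q * nx ^ 2 := by ring
    have hnu : nu ≤ Real.sqrt q * nx :=
      sqrt_mul_bound hq0 (norm_nonneg _) (norm_nonneg _) (le_trans hb1 hQb)
    -- bound on v
    have hnv : nv ≤ Real.sqrt a * (d * nx) := by
      refine sqrt_mul_bound ha0 (norm_nonneg _) ?_ ?_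
      · exact mul_nonneg (le_of_lt hd0) hnx0
      · rw [hnv_def, toE_norm_sq]
        have hv2 : v ⬝ᵥ v = (Δ *ᵥ x) ⬝ᵥ (A *ᵥ (Δ *ᵥ x)) := by
          have h := quadp S (Δ *ᵥ x)
          rw [hSt, hSsq] at h
          rw [hv_def, ← mulVec_mulVec]
          exact h.symm
        have hy : ‖toE (Δ *ᵥ x)‖ ≤ d * nx := toE_mulVec_le Δ x
        have hAy : (Δ *ᵥ x) ⬝ᵥ (A *ᵥ (Δ *ᵥ x)) ≤ a * ‖toE (Δ *ᵥ x)‖ ^ 2 := by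
          calc (Δ *ᵥ x) ⬝ᵥ (A *ᵥ (Δ *ᵥ x))
              ≤ ‖toE (Δ *ᵥ x)‖ * ‖toE (A *ᵥ (Δ *ᵥ x))‖ := dot_le_norm _ _
            _ ≤ ‖toE (Δ *ᵥ x)‖ * (a * ‖toE (Δ *ᵥ x)‖) :=
                mul_le_mul_of_nonneg_left (toE_mulVec_le A _) (norm_nonneg _)
            _ = a * ‖toE (Δ *ᵥ x)‖ ^ 2 := by ring
        have hyn : 0 ≤ ‖toE (Δ *ᵥ x)‖ := norm_nonneg _
        have hdx0 : (0:ℝ) ≤ d * nx := mul_nonneg (le_of_lt hd0) hnx0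
        have hmul : ‖toE (Δ *ᵥ x)‖ * ‖toE (Δ *ᵥ x)‖ ≤ (d * nx) * (d * nx) :=
          mul_le_mul hy hy hyn hdx0
        rw [hv2]
        nlinarith [mul_le_mul_of_nonneg_left hmul ha0]
    -- s * nv ≤ γ √a nx
    have hsnv : s * nv ≤ γ * Real.sqrt a * nx := by
      have h1 : s * nv ≤ s * (Real.sqrt a * (d * nx)) :=
        mul_le_mul_of_nonneg_left hnv hs0
      have h2 : s * (Real.sqrt a * (d * nx)) = lam * Real.sqrt a * nx := by
        rw [hs_def]; field_simp
      have h3 : lam * Real.sqrt a * nx ≤ γ * Real.sqrt a * nx := by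
        apply mul_le_mul_of_nonneg_right (mul_le_mul_of_nonneg_right hlamγ
          (Real.sqrt_nonneg a)) (norm_nonneg _)
      linarith
    -- final
    rw [hw, hwx]
    have hL : (u + s • v) ⬝ᵥ (u + s • v) = ‖toE (u + s • v)‖ ^ 2 := (toE_norm_sq _).symm
    have hLle : ‖toE (u + s • v)‖ ≤ nu + s * nv := by
      rw [toE_add, toE_smul]
      calc ‖toE u + s • toE v‖ ≤ ‖toE u‖ + ‖s • toE v‖ := norm_add_le _ _
        _ = nu + s * nv := by rw [norm_smul, Real.norm_eq_abs, abs_of_nonneg hs0]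
    have hL0 : 0 ≤ ‖toE (u + s • v)‖ := norm_nonneg _
    have hLsq : ‖toE (u + s • v)‖ ^ 2 ≤ (nu + s * nv) ^ 2 := by
      apply pow_le_pow_left₀ hL0 hLle
    have hcross : nu * (s * nv) ≤ (Real.sqrt q * nx) * (γ * Real.sqrt a * nx) :=
      mul_le_mul hnu hsnv (mul_nonneg hs0 hnv0) (mul_nonneg (Real.sqrt_nonneg q) hnx0)
    have hsq2 : (s * nv) ^ 2 ≤ (γ * Real.sqrt a * nx) ^ 2 :=
      pow_le_pow_left₀ (mul_nonneg hs0 hnv0) hsnv 2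
    have hsa : Real.sqrt a ^ 2 = a := Real.sq_sqrt ha0
    have hnu0 : 0 ≤ nu := norm_nonneg _
    rw [hL, hxx, hc_def]
    have hfinal : ‖toE (u + s • v)‖ ^ 2 ≤
        x ⬝ᵥ (Q *ᵥ x) + (2 * γ * Real.sqrt a * Real.sqrt q + γ ^ 2 * a) * nx ^ 2 := by
      calc ‖toE (u + s • v)‖ ^ 2 ≤ (nu + s * nv) ^ 2 := hLsq
        _ = nu ^ 2 + 2 * (nu * (s * nv)) + (s * nv) ^ 2 := by ring
        _ ≤ x ⬝ᵥ (Q *ᵥ x) + 2 * ((Real.sqrt q * nx) * (γ * Real.sqrt a * nx)) +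
              (γ * Real.sqrt a * nx) ^ 2 := by linarith
        _ = x ⬝ᵥ (Q *ᵥ x) + (2 * γ * Real.sqrt a * Real.sqrt q + γ ^ 2 * a) * nx ^ 2 := by
            rw [mul_pow, mul_pow, hsa]; ring
    linarith
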